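/- Let Γ1 be a signed graph on n1 vertices with adjacency matrix A1 and marking μ1, and Γ2 a signed graph on n2 vertices with adjacency matrix A2 and marking μ2 satisfying A2·μ2 = k·μ2 for some real k (as holds for a k-net-regular co-regular signed graph). Then for every real x with x·I_{n2} − A2 invertible, (x − k)^{n1} · det(x·I − A(Γ1⊛Γ2)) = det(x·I_{n2} − A2)^{n1} · det( (x³ − k·x² − n2·x)·I_{n1} − (x − k)·A_{1μ}² ); equivalently, besides the eigenvalues λ_{2i} (i ≥ 2) of A2 each repeated n1 times and the eigenvalue k with multiplicity n1(p−1) (p the multiplicity of k in A2), the spectrum of Γ1⊛Γ2 consists, for each eigenvalue λ' of A_{1μ}, of the three roots of x³ − k·x² − (n2 + λ'²)·x + k·λ'² = 0. -/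

import Mathlib

open Matrix Kronecker BigOperators

/-- The block `μ₂ᵀ ⊗ Φ₁`, where `Φ₁ = diag μ₁` and `μ₂` is regarded as an `n₂×1`
column vector: an `n₁ × (n₂·n₁)` matrix. -/
noncomputable def muBlock {n1 n2 : ℕ} (μ1 : Fin n1 → ℝ) (μ2 : Fin n2 → ℝ) :
    Matrix (Fin n1) (Fin n2 × Fin n1) ℝ :=
  Matrix.of fun i jk => μ2 jk.1 * Matrix.diagonal μ1 i jk.2

/-- Adjacency matrix of the duplication add vertex corona `Γ₁ ⊛ Γ₂`, in `3×3` block form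
`[[0, A₁μ, 0], [A₁μ, 0, μ₂ᵀ⊗Φ₁], [0, μ₂⊗Φ₁, A₂⊗I]]` (blocks of sizes `n₁, n₁, n₁·n₂`),
where `A₁μ = Φ₁·|A₁|·Φ₁` is supplied as a parameter. -/
noncomputable def coronaStar {n1 n2 : ℕ} (A1μ : Matrix (Fin n1) (Fin n1) ℝ)
    (A2 : Matrix (Fin n2) (Fin n2) ℝ) (μ1 : Fin n1 → ℝ) (μ2 : Fin n2 → ℝ) :
    Matrix ((Fin n1 ⊕ Fin n1) ⊕ Fin n2 × Fin n1)
      ((Fin n1 ⊕ Fin n1) ⊕ Fin n2 × Fin n1) ℝ :=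
  Matrix.fromBlocks
    (Matrix.fromBlocks 0 A1μ A1μ 0)
    (Matrix.fromRows (0 : Matrix (Fin n1) (Fin n2 × Fin n1) ℝ) (muBlock μ1 μ2))
    (Matrix.fromCols (0 : Matrix (Fin n2 × Fin n1) (Fin n1) ℝ) (muBlock μ1 μ2)ᵀ)
    (A2 ⊗ₖ (1 : Matrix (Fin n1) (Fin n1) ℝ))

/-- The signed `M`-coronal `χ_M(x) = μᵀ·(x·I − M)⁻¹·μ`. -/
noncomputable def coronal {V : Type} [Fintype V] [DecidableEq V]
    (M : Matrix V V ℝ) (μ : V → ℝ) (x : ℝ) : ℝ :=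
  μ ⬝ᵥ ((x • (1 : Matrix V V ℝ) - M)⁻¹ *ᵥ μ)

lemma det_blocks_scalar (m : Type) [Fintype m] [DecidableEq m] (A : Matrix m m ℝ) (x d : ℝ) :
    (Matrix.fromBlocks (x • (1 : Matrix m m ℝ)) (-A) (-A) (d • 1)).det
      = ((x * d) • (1 : Matrix m m ℝ) - A * A).det := by
  set F : ℝ → ℝ := fun d =>
    (Matrix.fromBlocks (x • (1 : Matrix m m ℝ)) (-A) (-A) 0
      + d • Matrix.fromBlocks 0 0 0 (1 : Matrix m m ℝ)).det with hF
  set G : ℝ → ℝ := fun d => ((x * d) • (1 : Matrix m m ℝ) - A * A).det with hG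
  have hblocks : ∀ d : ℝ,
      Matrix.fromBlocks (x • (1 : Matrix m m ℝ)) (-A) (-A) 0
        + d • Matrix.fromBlocks 0 0 0 (1 : Matrix m m ℝ)
      = Matrix.fromBlocks (x • (1 : Matrix m m ℝ)) (-A) (-A) (d • 1) := by
    intro d
    rw [Matrix.fromBlocks_smul, Matrix.fromBlocks_add]
    simp
  have key : ∀ d : ℝ, d ≠ 0 → F d = G d := by
    intro d hd
    have h1 : Matrix.fromBlocks (x • (1 : Matrix m m ℝ)) (-A) (-A) (d • 1) *
        Matrix.fromBlocks (d • (1 : Matrix m m ℝ)) 0 A 1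
        = Matrix.fromBlocks ((x * d) • (1 : Matrix m m ℝ) - A * A) (-A) 0 (d • 1) := by
      rw [Matrix.fromBlocks_multiply]
      simp [Matrix.smul_mul, Matrix.mul_smul, smul_smul, mul_comm d x, sub_eq_add_neg]
    have h2 := congrArg Matrix.det h1
    rw [Matrix.det_mul, Matrix.det_fromBlocks_zero₂₁, Matrix.det_fromBlocks_zero₁₂,
      Matrix.det_one, mul_one] at h2
    have hdet : (d • (1 : Matrix m m ℝ)).det ≠ 0 := by
      rw [Matrix.det_smul, Matrix.det_one, mul_one]
      exact pow_ne_zero _ hd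
    simp only [hF, hG, hblocks d]
    exact mul_right_cancel₀ hdet h2
  have hFG : F = G := by
    refine Continuous.ext_on (dense_compl_singleton (0 : ℝ)) ?_ ?_ ?_
    · exact (continuous_const.add (continuous_id.smul continuous_const)).matrix_det
    · exact (((continuous_const.mul continuous_id).smul continuous_const).sub
        continuous_const).matrix_det
    · intro d hd
      exact key d hd
  have := congrFun hFG d
  simpa only [hF, hG, hblocks d] using this

lemma muBlock_conj {n1 n2 : ℕ} (μ1 : Fin n1 → ℝ) (hμ1 : ∀ i, μ1 i * μ1 i = 1)
    (μ2 : Fin n2 → ℝ) (N : Matrix (Fin n2) (Fin n2) ℝ) :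
    muBlock μ1 μ2 * (N ⊗ₖ (1 : Matrix (Fin n1) (Fin n1) ℝ)) * (muBlock μ1 μ2)ᵀ
      = (μ2 ⬝ᵥ (N *ᵥ μ2)) • (1 : Matrix (Fin n1) (Fin n1) ℝ) := by
  ext i l
  simp only [Matrix.mul_apply, Matrix.transpose_apply, muBlock, Matrix.of_apply,
    Matrix.kroneckerMap_apply, Fintype.sum_prod_type, Matrix.diagonal_apply, Matrix.one_apply,
    Matrix.smul_apply, dotProduct, Matrix.mulVec, smul_eq_mul,
    mul_ite, ite_mul, mul_zero, zero_mul, mul_one, Finset.sum_ite_eq, Finset.sum_ite_eq',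
    Finset.mem_univ, if_true]
  rcases eq_or_ne i l with rfl | h
  · simp only [if_pos rfl, ite_true, Finset.sum_mul]
    rw [Finset.sum_comm]
    refine Finset.sum_congr rfl fun y _ => ?_
    rw [Finset.mul_sum]
    refine Finset.sum_congr rfl fun z _ => ?_
    linear_combination μ2 y * N y z * μ2 z * hμ1 i
  · simp [h]

/-- If `A₂·μ₂ = k·μ₂` (as for a `k`-net-regular co-regular signed graph), then
for every real `x` with `x·I − A₂` invertible,
`(x−k)^{n₁}·det(x·I − A(Γ₁⊛Γ₂)) = det(x·I − A₂)^{n₁} · det((x³ − k·x² − n₂·x)·I_{n₁} − (x−k)·A₁μ²)`. -/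
theorem corona_adjacency_net_regular (n1 n2 : ℕ) (k : ℝ)
    (A1 : Matrix (Fin n1) (Fin n1) ℝ) (hA1sym : A1.IsSymm) (hA1diag : ∀ i, A1 i i = 0)
    (hA1ent : ∀ i j, A1 i j = 1 ∨ A1 i j = 0 ∨ A1 i j = -1)
    (μ1 : Fin n1 → ℝ) (hμ1 : ∀ i, μ1 i = 1 ∨ μ1 i = -1)
    (A2 : Matrix (Fin n2) (Fin n2) ℝ) (hA2sym : A2.IsSymm) (hA2diag : ∀ i, A2 i i = 0)
    (hA2ent : ∀ i j, A2 i j = 1 ∨ A2 i j = 0 ∨ A2 i j = -1)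
    (μ2 : Fin n2 → ℝ) (hμ2 : ∀ i, μ2 i = 1 ∨ μ2 i = -1)
    (hreg : A2 *ᵥ μ2 = k • μ2)
    (x : ℝ) (hx : IsUnit (x • (1 : Matrix (Fin n2) (Fin n2) ℝ) - A2).det) :
    (x - k) ^ n1 *
        (x • 1 -
          coronaStar (Matrix.diagonal μ1 * A1.map abs * Matrix.diagonal μ1) A2 μ1 μ2).det
      = (x • (1 : Matrix (Fin n2) (Fin n2) ℝ) - A2).det ^ n1 *
        ((x ^ 3 - k * x ^ 2 - (n2 : ℝ) * x) • (1 : Matrix (Fin n1) (Fin n1) ℝ)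
          - (x - k) • (Matrix.diagonal μ1 * A1.map abs * Matrix.diagonal μ1) ^ 2).det := by
  have hμ1sq : ∀ i, μ1 i * μ1 i = 1 := fun i => by rcases hμ1 i with h | h <;> rw [h] <;> norm_num
  set Aμ := Matrix.diagonal μ1 * A1.map abs * Matrix.diagonal μ1 with hAμ
  set S : Matrix (Fin n2) (Fin n2) ℝ := x • 1 - A2 with hSdef
  set C := muBlock μ1 μ2 with hC
  set c : ℝ := μ2 ⬝ᵥ (S⁻¹ *ᵥ μ2) with hcdef
  -- the coronal identity (x - k) * c = n2
  have hSμ : S *ᵥ μ2 = (x - k) • μ2 := by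
    rw [hSdef, Matrix.sub_mulVec, hreg, Matrix.smul_mulVec, Matrix.one_mulVec, sub_smul]
  have hμ2sq : ∀ i, μ2 i * μ2 i = 1 := fun i => by rcases hμ2 i with h | h <;> rw [h] <;> norm_num
  have hc : (x - k) * c = n2 := by
    have h1 : (x - k) • (S⁻¹ *ᵥ μ2) = μ2 := by
      rw [← Matrix.mulVec_smul, ← hSμ, Matrix.mulVec_mulVec, Matrix.nonsing_inv_mul S hx,
        Matrix.one_mulVec]
    calc (x - k) * c = μ2 ⬝ᵥ ((x - k) • (S⁻¹ *ᵥ μ2)) := by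
          rw [dotProduct_smul, hcdef, smul_eq_mul]
      _ = μ2 ⬝ᵥ μ2 := by rw [h1]
      _ = n2 := by simp [dotProduct, hμ2sq]
  -- invertibility of the Kronecker block
  haveI : Invertible S := S.invertibleOfIsUnitDet hx
  have hdetK : (S ⊗ₖ (1 : Matrix (Fin n1) (Fin n1) ℝ)).det = S.det ^ n1 := by
    rw [Matrix.det_kronecker, Matrix.det_one, one_pow, mul_one, Fintype.card_fin]
  haveI : Invertible (S ⊗ₖ (1 : Matrix (Fin n1) (Fin n1) ℝ)) :=
    Matrix.invertibleOfIsUnitDet _ (by rw [hdetK]; exact hx.pow n1)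
  -- block decomposition of x•1 - coronaStar
  have hM : x • (1 : Matrix ((Fin n1 ⊕ Fin n1) ⊕ Fin n2 × Fin n1)
        ((Fin n1 ⊕ Fin n1) ⊕ Fin n2 × Fin n1) ℝ) - coronaStar Aμ A2 μ1 μ2
      = Matrix.fromBlocks
          (Matrix.fromBlocks (x • 1) (-Aμ) (-Aμ) (x • 1))
          (Matrix.fromRows 0 (-C))
          (Matrix.fromCols 0 (-Cᵀ))
          (S ⊗ₖ (1 : Matrix (Fin n1) (Fin n1) ℝ)) := by
    ext i j
    rcases i with (i | i) | i <;> rcases j with (j | j) | j <;>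
      simp [coronaStar, muBlock, hC, hSdef, Matrix.one_apply, Prod.ext_iff,
        Matrix.kroneckerMap_apply, mul_ite, ite_mul, and_comm] <;>
      split_ifs <;> first | ring1 | (exfalso; tauto)
  -- invOf the Kronecker block
  have hinv : ⅟(S ⊗ₖ (1 : Matrix (Fin n1) (Fin n1) ℝ)) = S⁻¹ ⊗ₖ 1 := by
    rw [Matrix.invOf_eq_nonsing_inv, Matrix.inv_kronecker, inv_one]
  -- Schur complement block
  have hschur : Matrix.fromRows (0 : Matrix (Fin n1) (Fin n2 × Fin n1) ℝ) (-C) *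
        (S⁻¹ ⊗ₖ (1 : Matrix (Fin n1) (Fin n1) ℝ)) *
        Matrix.fromCols (0 : Matrix (Fin n2 × Fin n1) (Fin n1) ℝ) (-Cᵀ)
      = Matrix.fromBlocks 0 0 0 (c • (1 : Matrix (Fin n1) (Fin n1) ℝ)) := by
    rw [Matrix.fromRows_mul, Matrix.fromRows_mul_fromCols]
    rw [hcdef, ← muBlock_conj μ1 hμ1sq μ2 S⁻¹, ← hC]
    congr 1 <;> simp [Matrix.neg_mul, Matrix.mul_neg]
  -- compute the determinant
  have hdet1 : (x • (1 : Matrix ((Fin n1 ⊕ Fin n1) ⊕ Fin n2 × Fin n1)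
        ((Fin n1 ⊕ Fin n1) ⊕ Fin n2 × Fin n1) ℝ) - coronaStar Aμ A2 μ1 μ2).det
      = S.det ^ n1 * ((x * (x - c)) • (1 : Matrix (Fin n1) (Fin n1) ℝ) - Aμ * Aμ).det := by
    rw [hM, Matrix.det_fromBlocks₂₂, hinv, hschur, hdetK]
    congr 1
    have hsub : Matrix.fromBlocks (x • (1 : Matrix (Fin n1) (Fin n1) ℝ)) (-Aμ) (-Aμ) (x • 1) -
        Matrix.fromBlocks 0 0 0 (c • 1)
        = Matrix.fromBlocks (x • (1 : Matrix (Fin n1) (Fin n1) ℝ)) (-Aμ) (-Aμ) ((x - c) • 1) := by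
      rw [sub_eq_add_neg, Matrix.fromBlocks_neg, Matrix.fromBlocks_add]
      simp [sub_smul, sub_eq_add_neg, add_smul, neg_smul]
    rw [hsub, det_blocks_scalar]
  rw [hdet1]
  -- final algebraic rearrangement
  have hsmul : (x - k) • ((x * (x - c)) • (1 : Matrix (Fin n1) (Fin n1) ℝ) - Aμ * Aμ)
      = (x ^ 3 - k * x ^ 2 - (n2 : ℝ) * x) • (1 : Matrix (Fin n1) (Fin n1) ℝ)
        - (x - k) • Aμ ^ 2 := by
    have hscalar : (x - k) * (x * (x - c)) = x ^ 3 - k * x ^ 2 - (n2 : ℝ) * x := by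
      linear_combination (-x) * hc
    rw [smul_sub, smul_smul, hscalar, pow_two Aμ]
  rw [← hsmul, Matrix.det_smul, Fintype.card_fin]
  ring
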